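/- For j = 1,…,q let (N_j,ρ_j) be a proper geodesic metric space with basepoint b_j such that every horofunction of (N_j,ρ_j) is a Busemann point and δ(h_j,h_j') = ∞ for every pair of distinct Busemann points h_j ≠ h_j' of (N_j,ρ_j). Let h(x) = max_{j∈J} (h_j(x_j) − α_j) and h'(x) = max_{j∈J'} (h'_j(x_j) − β_j) be Busemann points of the product (∏_{j=1}^q N_j, d_∞) with the same basepoint, where J, J' ⊆ {1,…,q} are non-empty, h_j (j ∈ J) and h'_j (j ∈ J') are Busemann points of the factors, and min_{j∈J} α_j = 0 = min_{j∈J'} β_j. If J ≠ J', or if J = J' and h_k ≠ h'_k for some k ∈ J, then δ(h,h') = ∞. -/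

import Mathlib

open Filter Topology

noncomputable section

/-- `horo b y z = d(z,y) - d(b,y)`, the function `h_y` with basepoint `b`. -/
def horo {M : Type*} [MetricSpace M] (b y z : M) : ℝ := dist z y - dist b y

/-- `HoroLim b y h` : the functions `h_{y^n}` (with basepoint `b`) converge pointwise to `h`. -/
def HoroLim {M : Type*} [MetricSpace M] (b : M) (y : ℕ → M) (h : M → ℝ) : Prop :=
  ∀ z : M, Filter.Tendsto (fun n => horo b (y n) z) Filter.atTop (nhds (h z))

/-- `h` is a horofunction of `(M,d)` with basepoint `b`. -/
def IsHorofunction {M : Type*} [MetricSpace M] (b : M) (h : M → ℝ) : Prop :=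
  (∃ y : ℕ → M, HoroLim b y h) ∧ ∀ y : M, h ≠ horo b y

/-- A metric space is geodesic: any two points are joined by a geodesic path. -/
def IsGeodesicSpace (M : Type*) [MetricSpace M] : Prop :=
  ∀ x y : M, ∃ γ : ℝ → M, γ 0 = x ∧ γ (dist x y) = y ∧
    ∀ s ∈ Set.Icc (0 : ℝ) (dist x y), ∀ t ∈ Set.Icc (0 : ℝ) (dist x y),
      dist (γ s) (γ t) = |s - t|

/-- Almost geodesic sequence. -/
def IsAlmostGeodesicSeq {M : Type*} [MetricSpace M] (y : ℕ → M) : Prop :=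
  Filter.Tendsto (fun n => dist (y n) (y 0)) Filter.atTop Filter.atTop ∧
  ∀ ε > (0 : ℝ), ∃ N : ℕ, ∀ m k : ℕ, N ≤ k → k ≤ m →
    dist (y m) (y k) + dist (y k) (y 0) - dist (y m) (y 0) < ε

/-- A Busemann point: a horofunction that is the limit of an almost geodesic sequence. -/
def IsBusemannPoint {M : Type*} [MetricSpace M] (b : M) (h : M → ℝ) : Prop :=
  IsHorofunction b h ∧ ∃ y : ℕ → M, IsAlmostGeodesicSeq y ∧ HoroLim b y h

/-- Detour cost `H(h₁,h₂)`, with values in `EReal` (so it may be `⊤ = ∞`). -/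
def detourCost {M : Type*} [MetricSpace M] (b : M) (h₁ h₂ : M → ℝ) : EReal :=
  ⨅ z : {z : ℕ → M // HoroLim b z h₁},
    Filter.liminf (fun n => ((dist b (z.1 n) + h₂ (z.1 n) : ℝ) : EReal)) Filter.atTop

/-- Detour distance `δ(h₁,h₂) = H(h₁,h₂) + H(h₂,h₁)`. -/
def detourDist {M : Type*} [MetricSpace M] (b : M) (h₁ h₂ : M → ℝ) : EReal :=
  detourCost b h₁ h₂ + detourCost b h₂ h₁

section Aux

variable {M : Type*} [MetricSpace M]

lemma neg_dist_le_horo (b y z : M) : -dist b z ≤ horo b y z := by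
  have h1 := dist_triangle b z y
  simp only [horo]
  linarith

lemma horo_le_dist (b y z : M) : horo b y z ≤ dist b z := by
  have h1 := dist_triangle z b y
  have h2 := dist_comm z b
  simp only [horo]
  linarith

lemma horo_le_lipschitz (b y x x' : M) : horo b y x ≤ horo b y x' + dist x x' := by
  have h1 := dist_triangle x x' y
  simp only [horo]
  linarith

lemma abs_horo_sub_horo_le (b y x x' : M) : |horo b y x - horo b y x'| ≤ dist x x' := by
  have h := abs_dist_sub_le x x' y
  simp only [horo]
  have h2 : dist x y - dist b y - (dist x' y - dist b y) = dist x y - dist x' y := by ring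
  rw [h2]
  exact h

lemma HoroLim.neg_dist_le {b : M} {y : ℕ → M} {h : M → ℝ} (hl : HoroLim b y h) (z : M) :
    -dist b z ≤ h z :=
  le_of_tendsto_of_tendsto' tendsto_const_nhds (hl z) fun n => neg_dist_le_horo b (y n) z

lemma HoroLim.lipschitz {b : M} {y : ℕ → M} {h : M → ℝ} (hl : HoroLim b y h) (x x' : M) :
    h x ≤ h x' + dist x x' :=
  le_of_tendsto_of_tendsto' (hl x) ((hl x').add tendsto_const_nhds)
    fun n => horo_le_lipschitz b (y n) x x'

lemma HoroLim.basepoint {b : M} {y : ℕ → M} {h : M → ℝ} (hl : HoroLim b y h) : h b = 0 := by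
  have h0 : (fun n => horo b (y n) b) = fun _ => (0 : ℝ) := funext fun n => sub_self _
  exact tendsto_nhds_unique (hl b) (by rw [h0]; exact tendsto_const_nhds)

lemma HoroLim.comp {b : M} {y : ℕ → M} {h : M → ℝ} (hl : HoroLim b y h) {φ : ℕ → ℕ}
    (hφ : StrictMono φ) : HoroLim b (fun n => y (φ n)) h :=
  fun z => (hl z).comp hφ.tendsto_atTop

/-- Along an almost geodesic, `h (y n) ≤ 1 + d(b,y⁰) - d(yⁿ,y⁰)` eventually. -/
lemma busemann_ub {b : M} {y : ℕ → M} {h : M → ℝ} (hag : IsAlmostGeodesicSeq y)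
    (hl : HoroLim b y h) :
    ∃ N : ℕ, ∀ n, N ≤ n → h (y n) ≤ 1 + dist b (y 0) - dist (y n) (y 0) := by
  obtain ⟨N, hN⟩ := hag.2 1 one_pos
  refine ⟨N, fun n hn => ?_⟩
  refine le_of_tendsto (hl (y n)) ?_
  filter_upwards [eventually_ge_atTop n] with m hm
  have h1 := hN m n hn hm
  have h2 := dist_triangle (y m) b (y 0)
  have h3 := dist_comm (y m) b
  have h4 := dist_comm (y n) (y m)
  simp only [horo]
  linarith

lemma busemann_unbounded_below {b : M} {h : M → ℝ} (hb : IsBusemannPoint b h) (R : ℝ) :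
    ∃ x, h x ≤ R := by
  obtain ⟨-, y, hag, hl⟩ := hb
  obtain ⟨N, hN⟩ := busemann_ub hag hl
  obtain ⟨n, hn⟩ :=
    ((hag.1.eventually_ge_atTop (1 + dist b (y 0) - R)).and (eventually_ge_atTop N)).exists
  refine ⟨y n, ?_⟩
  have := hN n hn.2
  linarith [hn.1]

lemma busemann_selfcost {b : M} {y : ℕ → M} {h : M → ℝ} (hag : IsAlmostGeodesicSeq y)
    (hl : HoroLim b y h) :
    ∃ N : ℕ, ∀ n, N ≤ n → dist b (y n) + h (y n) ≤ 1 + 2 * dist b (y 0) := by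
  obtain ⟨N, hN⟩ := busemann_ub hag hl
  refine ⟨N, fun n hn => ?_⟩
  have h1 := hN n hn
  have h2 := dist_triangle b (y 0) (y n)
  have h3 := dist_comm (y 0) (y n)
  linarith

lemma detourCost_nonneg {b : M} {h₁ h₂ : M → ℝ} (hb : ∀ z, -dist b z ≤ h₂ z) :
    0 ≤ detourCost b h₁ h₂ := by
  refine le_iInf fun z => ?_
  refine le_liminf_of_le (by isBoundedDefault) (Eventually.of_forall fun n => ?_)
  have h1 := hb (z.1 n)
  exact EReal.coe_nonneg.mpr (by linarith)

lemma detourCost_le {b : M} {h₁ h₂ : M → ℝ} (z : ℕ → M) (hz : HoroLim b z h₁) (C : ℝ)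
    (hC : ∀ᶠ n in atTop, dist b (z n) + h₂ (z n) ≤ C) : detourCost b h₁ h₂ ≤ (C : EReal) := by
  refine iInf_le_of_le ⟨z, hz⟩ ?_
  refine liminf_le_of_frequently_le ?_ (by isBoundedDefault)
  exact (hC.mono fun n hn => EReal.coe_le_coe_iff.mpr hn).frequently

lemma detourCost_extract {b : M} {h₁ h₂ : M → ℝ} (hne : detourCost b h₁ h₂ ≠ ⊤) :
    ∃ z : ℕ → M, HoroLim b z h₁ ∧ ∃ C : ℝ, ∀ n, dist b (z n) + h₂ (z n) ≤ C := by
  have hlt : detourCost b h₁ h₂ < ⊤ := lt_top_iff_ne_top.mpr hne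
  rw [detourCost, iInf_lt_iff] at hlt
  obtain ⟨⟨z, hz⟩, hzlt⟩ := hlt
  obtain ⟨C, hC1, -⟩ := EReal.lt_iff_exists_real_btwn.mp hzlt
  have hfreq : ∃ᶠ n in atTop, ((dist b (z n) + h₂ (z n) : ℝ) : EReal) < (C : EReal) :=
    frequently_lt_of_liminf_lt (by isBoundedDefault) hC1
  have hfreq' : ∃ᶠ n in atTop, dist b (z n) + h₂ (z n) ≤ C :=
    hfreq.mono fun n hn => (EReal.coe_lt_coe_iff.mp hn).le
  obtain ⟨φ, hφ, hall⟩ := Filter.extraction_of_frequently_atTop hfreq'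
  exact ⟨fun n => z (φ n), hz.comp hφ, C, hall⟩

/-- Arzelà–Ascoli style extraction: any sequence has a subsequence along which the
horofunctions converge pointwise. -/
lemma exists_horolim_subseq [ProperSpace M] (b : M) (w : ℕ → M) :
    ∃ φ : ℕ → ℕ, StrictMono φ ∧ ∃ g : M → ℝ, HoroLim b (fun n => w (φ n)) g := by
  have hne : Nonempty M := ⟨b⟩
  set e := TopologicalSpace.denseSeq M with he
  have hde : DenseRange e := TopologicalSpace.denseRange_denseSeq M
  set F : ℕ → ℕ → ℝ := fun n i => horo b (w n) (e i) with hF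
  have hmem : ∀ n, F n ∈ Set.univ.pi fun i => Set.Icc (-dist b (e i)) (dist b (e i)) := by
    intro n i _
    exact ⟨neg_dist_le_horo b (w n) (e i), horo_le_dist b (w n) (e i)⟩
  obtain ⟨L, -, φ, hφ, hLtend⟩ :=
    (isCompact_univ_pi fun i => isCompact_Icc).isSeqCompact hmem
  have hpt : ∀ i, Tendsto (fun n => horo b (w (φ n)) (e i)) atTop (𝓝 (L i)) :=
    fun i => tendsto_pi_nhds.mp hLtend i
  have hcauchy : ∀ x : M, CauchySeq fun n => horo b (w (φ n)) x := by
    intro x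
    rw [Metric.cauchySeq_iff]
    intro ε hε
    obtain ⟨i, hi⟩ := hde.exists_dist_lt x (by linarith : (0 : ℝ) < ε / 4)
    have hci : CauchySeq fun n => horo b (w (φ n)) (e i) := (hpt i).cauchySeq
    rw [Metric.cauchySeq_iff] at hci
    obtain ⟨N, hN⟩ := hci (ε / 2) (by linarith)
    refine ⟨N, fun m hm n hn => ?_⟩
    have e1 := abs_horo_sub_horo_le b (w (φ m)) x (e i)
    have e2 := hN m hm n hn
    have e3 := abs_horo_sub_horo_le b (w (φ n)) (e i) x
    rw [Real.dist_eq] at e2 ⊢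
    have e4 : |horo b (w (φ m)) x - horo b (w (φ n)) x| ≤
        |horo b (w (φ m)) x - horo b (w (φ m)) (e i)| +
        |horo b (w (φ m)) (e i) - horo b (w (φ n)) (e i)| +
        |horo b (w (φ n)) (e i) - horo b (w (φ n)) x| := by
      have t1 := abs_sub_le (horo b (w (φ m)) x) (horo b (w (φ m)) (e i))
        (horo b (w (φ n)) x)
      have t2 := abs_sub_le (horo b (w (φ m)) (e i)) (horo b (w (φ n)) (e i))
        (horo b (w (φ n)) x)
      linarith
    have e5 : dist (e i) x = dist x (e i) := dist_comm _ _
    rw [e5] at e3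
    linarith
  choose g hg using fun x => cauchySeq_tendsto_of_complete (hcauchy x)
  exact ⟨φ, hφ, g, hg⟩

end Aux

/-- The key contamination lemma: if the detour cost from the `J`-point to the `J'`-point is
finite, then any `k ∈ J'` also lies in `J`, and the factor detour cost from `hs k` to
`hs' k` is finite. -/
lemma stmt_14_main {q : ℕ} {N : Fin q → Type*} [∀ j, MetricSpace (N j)]
    [∀ j, ProperSpace (N j)] (b : ∀ j, N j)
    (J J' : Finset (Fin q)) (hJ : J.Nonempty) (hJ' : J'.Nonempty)
    (hs hs' : ∀ j, N j → ℝ)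
    (hsb : ∀ j ∈ J, IsBusemannPoint (b j) (hs j))
    (hsb' : ∀ j ∈ J', IsBusemannPoint (b j) (hs' j))
    (α β : Fin q → ℝ) (hα : ∀ j ∈ J, 0 ≤ α j)
    (hcost : detourCost b (fun x => J.sup' hJ fun j => hs j (x j) - α j)
      (fun x => J'.sup' hJ' fun j => hs' j (x j) - β j) ≠ ⊤)
    {k : Fin q} (hk : k ∈ J') :
    k ∈ J ∧ ∃ c : ℝ, detourCost (b k) (hs k) (hs' k) ≤ (c : EReal) := by
  classical
  obtain ⟨z, hz, C, hC⟩ := detourCost_extract hcost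
  obtain ⟨yk', hyk'⟩ := (hsb' k hk).1.1
  have hlow : ∀ x, -dist (b k) x ≤ hs' k x := hyk'.neg_dist_le
  have hlip' : ∀ x x', hs' k x ≤ hs' k x' + dist x x' := hyk'.lipschitz
  have hC' : ∀ n, dist b (z n) + J'.sup' hJ' (fun j => hs' j (z n j) - β j) ≤ C := hC
  have hsup' : ∀ n, hs' k (z n k) - β k ≤ J'.sup' hJ' (fun j => hs' j (z n j) - β j) :=
    fun n => Finset.le_sup' (fun j => hs' j (z n j) - β j) hk
  have key1 : ∀ n, dist (b k) (z n k) + hs' k (z n k) ≤ C + β k := by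
    intro n
    have h1 := hC' n
    have h2 := hsup' n
    have h3 := dist_le_pi_dist b (z n) k
    linarith
  have key2 : ∀ n, dist (b k) (z n k) - dist b (z n) ∈ Set.Icc (-(C + β k)) (0 : ℝ) := by
    intro n
    have h1 := hC' n
    have h2 := hsup' n
    have h4 := hlow (z n k)
    have h3 := dist_le_pi_dist b (z n) k
    exact ⟨by linarith, by linarith⟩
  obtain ⟨r, -, φ1, hφ1, hrtend⟩ :=
    (isCompact_Icc (a := -(C + β k)) (b := (0 : ℝ))).tendsto_subseq key2
  obtain ⟨φ2, hφ2, g, hg⟩ := exists_horolim_subseq (b k) (fun n => z (φ1 n) k)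
  have hψmono : StrictMono fun n => φ1 (φ2 n) := hφ1.comp hφ2
  have hzψ : HoroLim b (fun n => z (φ1 (φ2 n))) (fun x => J.sup' hJ fun j => hs j (x j) - α j) :=
    hz.comp hψmono
  have hrψ : Tendsto (fun n => dist (b k) (z (φ1 (φ2 n)) k) - dist b (z (φ1 (φ2 n))))
      atTop (𝓝 r) := by
    have := hrtend.comp hφ2.tendsto_atTop
    exact this
  have hgk : ∀ x : N k, Tendsto (fun n => horo (b k) (z (φ1 (φ2 n)) k) x) atTop (𝓝 (g x)) :=
    fun x => hg x
  -- the key inequality: `g (x k) + r ≤ h x` for every `x`.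
  have hdagger : ∀ x : ∀ j, N j, g (x k) + r ≤ J.sup' hJ (fun j => hs j (x j) - α j) := by
    intro x
    have hA : Tendsto (fun n => horo (b k) (z (φ1 (φ2 n)) k) (x k) +
        (dist (b k) (z (φ1 (φ2 n)) k) - dist b (z (φ1 (φ2 n))))) atTop (𝓝 (g (x k) + r)) :=
      (hgk (x k)).add hrψ
    have hB : Tendsto (fun n => horo b (z (φ1 (φ2 n))) x) atTop
        (𝓝 (J.sup' hJ fun j => hs j (x j) - α j)) := hzψ x
    refine le_of_tendsto_of_tendsto' hA hB fun n => ?_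
    have h1 := dist_le_pi_dist x (z (φ1 (φ2 n))) k
    simp only [horo]
    linarith
  have hpts : ∀ j, j ∈ J → ∀ m : ℝ, ∃ x, hs j x ≤ m :=
    fun j hj m => busemann_unbounded_below (hsb j hj) m
  by_cases hkJ : k ∈ J
  · refine ⟨hkJ, ?_⟩
    -- `g ≤ hs k - α k - r`
    have hgle : ∀ xk : N k, g xk ≤ hs k xk - α k - r := by
      intro xk
      set T := hs k xk - α k with hT
      set x : ∀ j, N j :=
        Function.update (fun j => if hj : j ∈ J then Classical.choose (hpts j hj T) else b j)
          k xk with hx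
      have hxk : x k = xk := Function.update_self ..
      have hsup : J.sup' hJ (fun j => hs j (x j) - α j) ≤ T := by
        refine Finset.sup'_le hJ _ fun j hj => ?_
        show hs j (x j) - α j ≤ T
        by_cases hjk : j = k
        · subst hjk
          rw [hxk]
        · have hxj : x j = if hj : j ∈ J then Classical.choose (hpts j hj T) else b j :=
            Function.update_of_ne hjk _ _
          rw [hxj, dif_pos hj]
          have h1 := Classical.choose_spec (hpts j hj T)
          have h2 := hα j hj
          linarith
      have h3 := hdagger x
      rw [hxk] at h3
      simp only [hT] at hsup ⊢
      linarith
    obtain ⟨-, u, hag, hu⟩ := hsb k hkJ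
    obtain ⟨Nu, hNu⟩ := busemann_selfcost hag hu
    have hstep : ∀ n, dist (b k) (u n) + hs' k (u n) ≤
        dist (b k) (u n) + g (u n) + (C + β k) := by
      intro n
      have hlim : Tendsto (fun m => dist (b k) (u n) + horo (b k) (z (φ1 (φ2 m)) k) (u n) +
          (C + β k)) atTop (𝓝 (dist (b k) (u n) + g (u n) + (C + β k))) :=
        (tendsto_const_nhds.add (hgk (u n))).add tendsto_const_nhds
      refine le_of_tendsto_of_tendsto' tendsto_const_nhds hlim fun m => ?_
      have h1 := hlip' (u n) (z (φ1 (φ2 m)) k)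
      have h2 := key1 (φ1 (φ2 m))
      simp only [horo]
      linarith
    have hev : ∀ᶠ n in atTop, dist (b k) (u n) + hs' k (u n) ≤
        1 + 2 * dist (b k) (u 0) + (-α k - r) + (C + β k) := by
      filter_upwards [eventually_ge_atTop Nu] with n hn
      have h1 := hstep n
      have h2 := hgle (u n)
      have h3 := hNu n hn
      linarith
    exact ⟨_, detourCost_le u hu _ hev⟩
  · exfalso
    set x : ∀ j, N j := fun j => if hj : j ∈ J then Classical.choose (hpts j hj (r - 1)) else b j
      with hx
    have hxk : x k = b k := dif_neg hkJ
    have hsup : J.sup' hJ (fun j => hs j (x j) - α j) ≤ r - 1 := by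
      refine Finset.sup'_le hJ _ fun j hj => ?_
      show hs j (x j) - α j ≤ r - 1
      have hxj : x j = Classical.choose (hpts j hj (r - 1)) := by rw [hx]; exact dif_pos hj
      rw [hxj]
      have h1 := Classical.choose_spec (hpts j hj (r - 1))
      have h2 := hα j hj
      linarith
    have hgb : g (b k) = 0 := HoroLim.basepoint hg
    have h3 := hdagger x
    rw [hxk, hgb] at h3
    linarith

/-- product Busemann points built from different index sets, or from distinct
factor Busemann points, lie at infinite detour distance. -/
theorem stmt_14 (q : ℕ) (N : Fin q → Type*) [∀ j, MetricSpace (N j)] [∀ j, ProperSpace (N j)]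
    (hgeo : ∀ j, IsGeodesicSpace (N j)) (b : ∀ j, N j)
    (hbus : ∀ j, ∀ h : N j → ℝ, IsHorofunction (b j) h → IsBusemannPoint (b j) h)
    (hdet : ∀ j, ∀ h h' : N j → ℝ, IsBusemannPoint (b j) h → IsBusemannPoint (b j) h' →
      h ≠ h' → detourDist (b j) h h' = ⊤)
    (J J' : Finset (Fin q)) (hJ : J.Nonempty) (hJ' : J'.Nonempty)
    (hs hs' : ∀ j, N j → ℝ)
    (hsb : ∀ j ∈ J, IsBusemannPoint (b j) (hs j))
    (hsb' : ∀ j ∈ J', IsBusemannPoint (b j) (hs' j))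
    (α β : Fin q → ℝ)
    (hα : ∀ j ∈ J, 0 ≤ α j) (hα0 : ∃ j ∈ J, α j = 0)
    (hβ : ∀ j ∈ J', 0 ≤ β j) (hβ0 : ∃ j ∈ J', β j = 0)
    (hBus : IsBusemannPoint b (fun x => J.sup' hJ fun j => hs j (x j) - α j))
    (hBus' : IsBusemannPoint b (fun x => J'.sup' hJ' fun j => hs' j (x j) - β j))
    (hne : J ≠ J' ∨ (J = J' ∧ ∃ k ∈ J, hs k ≠ hs' k)) :
    detourDist b (fun x => J.sup' hJ fun j => hs j (x j) - α j)
      (fun x => J'.sup' hJ' fun j => hs' j (x j) - β j) = ⊤ := by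
  classical
  by_contra hcon
  obtain ⟨j0, hj0, hα0'⟩ := hα0
  obtain ⟨j1, hj1, hβ0'⟩ := hβ0
  obtain ⟨y0, hy0⟩ := (hsb j0 hj0).1.1
  obtain ⟨y1, hy1⟩ := (hsb' j1 hj1).1.1
  have hlow : ∀ x : ∀ j, N j,
      -dist b x ≤ (fun x => J.sup' hJ fun j => hs j (x j) - α j) x := by
    intro x
    have h1 : hs j0 (x j0) - α j0 ≤ J.sup' hJ (fun j => hs j (x j) - α j) :=
      Finset.le_sup' (fun j => hs j (x j) - α j) hj0
    have h2 := hy0.neg_dist_le (x j0)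
    have h3 := dist_le_pi_dist b x j0
    show -dist b x ≤ J.sup' hJ (fun j => hs j (x j) - α j)
    linarith [hα0']
  have hlow' : ∀ x : ∀ j, N j,
      -dist b x ≤ (fun x => J'.sup' hJ' fun j => hs' j (x j) - β j) x := by
    intro x
    have h1 : hs' j1 (x j1) - β j1 ≤ J'.sup' hJ' (fun j => hs' j (x j) - β j) :=
      Finset.le_sup' (fun j => hs' j (x j) - β j) hj1
    have h2 := hy1.neg_dist_le (x j1)
    have h3 := dist_le_pi_dist b x j1
    show -dist b x ≤ J'.sup' hJ' (fun j => hs' j (x j) - β j)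
    linarith [hβ0']
  have hA : (0 : EReal) ≤ detourCost b (fun x => J.sup' hJ fun j => hs j (x j) - α j)
      (fun x => J'.sup' hJ' fun j => hs' j (x j) - β j) := detourCost_nonneg hlow'
  have hB : (0 : EReal) ≤ detourCost b (fun x => J'.sup' hJ' fun j => hs' j (x j) - β j)
      (fun x => J.sup' hJ fun j => hs j (x j) - α j) := detourCost_nonneg hlow
  have hAbot : detourCost b (fun x => J.sup' hJ fun j => hs j (x j) - α j)
      (fun x => J'.sup' hJ' fun j => hs' j (x j) - β j) ≠ ⊥ :=
    ne_of_gt (lt_of_lt_of_le (by simp : (⊥ : EReal) < 0) hA)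
  have hBbot : detourCost b (fun x => J'.sup' hJ' fun j => hs' j (x j) - β j)
      (fun x => J.sup' hJ fun j => hs j (x j) - α j) ≠ ⊥ :=
    ne_of_gt (lt_of_lt_of_le (by simp : (⊥ : EReal) < 0) hB)
  have hAne : detourCost b (fun x => J.sup' hJ fun j => hs j (x j) - α j)
      (fun x => J'.sup' hJ' fun j => hs' j (x j) - β j) ≠ ⊤ := by
    intro htop
    apply hcon
    rw [detourDist, htop, EReal.top_add_of_ne_bot hBbot]
  have hBne : detourCost b (fun x => J'.sup' hJ' fun j => hs' j (x j) - β j)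
      (fun x => J.sup' hJ fun j => hs j (x j) - α j) ≠ ⊤ := by
    intro htop
    apply hcon
    rw [detourDist, htop, EReal.add_top_of_ne_bot hAbot]
  rcases hne with hJne | ⟨hJeq, k, hkJ, hkne⟩
  · have hsplit : ¬J ⊆ J' ∨ ¬J' ⊆ J := by
      by_contra hc
      push_neg at hc
      exact hJne (Finset.Subset.antisymm hc.1 hc.2)
    rcases hsplit with hns | hns
    · obtain ⟨k, hkJ, hknJ'⟩ := Finset.not_subset.mp hns
      exact hknJ' (stmt_14_main b J' J hJ' hJ hs' hs hsb' hsb β α hβ hBne hkJ).1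
    · obtain ⟨k, hkJ', hknJ⟩ := Finset.not_subset.mp hns
      exact hknJ (stmt_14_main b J J' hJ hJ' hs hs' hsb hsb' α β hα hAne hkJ').1
  · subst hJeq
    obtain ⟨-, c1, hc1⟩ := stmt_14_main b J J hJ hJ' hs hs' hsb hsb' α β hα hAne hkJ
    obtain ⟨-, c2, hc2⟩ := stmt_14_main b J J hJ' hJ hs' hs hsb' hsb β α hβ hBne hkJ
    have hd := hdet k (hs k) (hs' k) (hsb k hkJ) (hsb' k hkJ) hkne
    have hle : detourCost (b k) (hs k) (hs' k) + detourCost (b k) (hs' k) (hs k) ≤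
        ((c1 + c2 : ℝ) : EReal) := by
      rw [EReal.coe_add]
      exact add_le_add hc1 hc2
    rw [detourDist] at hd
    rw [hd] at hle
    exact (EReal.coe_lt_top (c1 + c2)).not_ge hle
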